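/- Let F be a finite field with q elements. The set of nonzero 2×2 matrices over F with determinant zero is partitioned by the equivalence 'M ~ M′ iff M′ = DM for some invertible D' into exactly q + 1 classes, each class together with 0 forming a set {DM : D ∈ M₂(F)} of cardinality q². -/

import Mathlib

namespace OrbitAux

variable {F : Type*} [Field F]

/-- The set of matrices all of whose rows are multiples of `v`. -/
def Sv (v : Fin 2 → F) : Set (Matrix (Fin 2) (Fin 2) F) :=
  {N | ∀ i, ∃ c : F, N i = c • v}

lemma rows_dep (M : Matrix (Fin 2) (Fin 2) F) (hM : M ≠ 0) (hdet : M.det = 0) :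
    ∃ v a : Fin 2 → F, v ≠ 0 ∧ (∃ i, a i ≠ 0) ∧ ∀ i, M i = a i • v := by
  rw [Matrix.det_fin_two] at hdet
  by_cases h0 : M 0 = 0
  · have h1 : M 1 ≠ 0 := by
      intro h1
      apply hM
      ext i j
      fin_cases i
      · simp [congrFun h0 j]
      · simp [congrFun h1 j]
    exact ⟨M 1, ![0, 1], h1, ⟨1, by norm_num⟩, by
      intro i; fin_cases i <;> simp [h0]⟩
  · have hj : ∃ j, M 0 j ≠ 0 := by
      by_contra h
      push_neg at h
      exact h0 (funext h)
    obtain ⟨j, hj⟩ := hj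
    refine ⟨M 0, ?_⟩
    fin_cases j
    · have hj' : M 0 0 ≠ 0 := by simpa using hj
      refine ⟨![1, M 1 0 / M 0 0], h0, ⟨0, by norm_num⟩, ?_⟩
      intro i
      fin_cases i
      · simp
      · funext l
        fin_cases l
        · simp only [Pi.smul_apply, smul_eq_mul, Fin.mk_one, Fin.zero_eta, Matrix.cons_val_one, Matrix.cons_val_zero, Matrix.head_cons]
          field_simp
        · simp only [Pi.smul_apply, smul_eq_mul, Fin.mk_one, Fin.zero_eta, Matrix.cons_val_one, Matrix.cons_val_zero, Matrix.head_cons]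
          field_simp
          linear_combination hdet
    · have hj' : M 0 1 ≠ 0 := by simpa using hj
      refine ⟨![1, M 1 1 / M 0 1], h0, ⟨0, by norm_num⟩, ?_⟩
      intro i
      fin_cases i
      · simp
      · funext l
        fin_cases l
        · simp only [Pi.smul_apply, smul_eq_mul, Fin.mk_one, Fin.zero_eta, Matrix.cons_val_one, Matrix.cons_val_zero, Matrix.head_cons]
          field_simp
          linear_combination -hdet
        · simp only [Pi.smul_apply, smul_eq_mul, Fin.mk_one, Fin.zero_eta, Matrix.cons_val_one, Matrix.cons_val_zero, Matrix.head_cons]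
          field_simp

lemma orbit_eq_Sv (M : Matrix (Fin 2) (Fin 2) F) (v a : Fin 2 → F)
    (ha : ∃ i, a i ≠ 0) (hM : ∀ i, M i = a i • v) :
    {N | ∃ D : Matrix (Fin 2) (Fin 2) F, N = D * M} = Sv v := by
  obtain ⟨i₀, hi₀⟩ := ha
  ext N
  constructor
  · rintro ⟨D, rfl⟩ i
    refine ⟨D i 0 * a 0 + D i 1 * a 1, ?_⟩
    funext l
    have h0 := congrFun (hM 0) l
    have h1 := congrFun (hM 1) l
    simp only [Pi.smul_apply, smul_eq_mul] at h0 h1 ⊢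
    simp [Matrix.mul_apply, Fin.sum_univ_two, h0, h1]
    ring
  · intro hN
    choose c hc using hN
    refine ⟨Matrix.of fun i k => if k = i₀ then c i / a i₀ else 0, ?_⟩
    ext i l
    rw [Matrix.mul_apply, Fin.sum_univ_two]
    have hcl := congrFun (hc i) l
    have hml := congrFun (hM i₀) l
    simp only [Pi.smul_apply, smul_eq_mul] at hcl hml
    fin_cases i₀ <;>
      simp_all <;> field_simp <;> ring

lemma orbit_exists (M : Matrix (Fin 2) (Fin 2) F) (hM : M ≠ 0) (hdet : M.det = 0) :
    ∃ v : Fin 2 → F, v ≠ 0 ∧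
      {N | ∃ D : Matrix (Fin 2) (Fin 2) F, N = D * M} = Sv v := by
  obtain ⟨v, a, hv, ha, hrows⟩ := rows_dep M hM hdet
  exact ⟨v, hv, orbit_eq_Sv M v a ha hrows⟩

/-- The constant-rows matrix with all rows `v`. -/
def cm (v : Fin 2 → F) : Matrix (Fin 2) (Fin 2) F := Matrix.of fun _ => v

lemma cm_ne_zero {v : Fin 2 → F} (hv : v ≠ 0) : cm v ≠ 0 := by
  intro h
  apply hv
  funext j
  exact congrFun (congrFun h 0) j

lemma cm_det (v : Fin 2 → F) : (cm v).det = 0 := by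
  rw [Matrix.det_fin_two]
  simp [cm]
  ring

lemma cm_orbit (v : Fin 2 → F) :
    {N | ∃ D : Matrix (Fin 2) (Fin 2) F, N = D * cm v} = Sv v :=
  orbit_eq_Sv _ v (fun _ => 1) ⟨0, one_ne_zero⟩ (fun i => by simp only [one_smul]; rfl)

lemma cm_mem_Sv (v : Fin 2 → F) : cm v ∈ Sv v := fun i => ⟨1, by simp only [one_smul]; rfl⟩

lemma Sv_sub (v w : Fin 2 → F) (h : Sv v = Sv w) : ∃ c : F, v = c • w := by
  have := h ▸ cm_mem_Sv v
  obtain ⟨c, hc⟩ := this 0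
  exact ⟨c, hc⟩

lemma Sv_smul (v : Fin 2 → F) (c : F) (hc : c ≠ 0) : Sv (c • v) = Sv v := by
  ext N
  constructor
  · rintro h i
    obtain ⟨d, hd⟩ := h i
    exact ⟨d * c, by rw [hd, mul_smul]⟩
  · rintro h i
    obtain ⟨d, hd⟩ := h i
    exact ⟨d / c, by rw [hd, smul_smul, div_mul_cancel₀ d hc]⟩

lemma Sv_card [Fintype F] (v : Fin 2 → F) (hv : v ≠ 0) :
    (Sv v).ncard = Fintype.card F ^ 2 := by
  have hj : ∃ j, v j ≠ 0 := by
    by_contra h; push_neg at h; exact hv (funext h)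
  obtain ⟨j₀, hj₀⟩ := hj
  have hrange : Sv v = Set.range (fun c : Fin 2 → F => (Matrix.of fun i => c i • v)) := by
    ext N
    constructor
    · intro h
      choose c hc using h
      exact ⟨c, by ext i l; exact (congrFun (hc i) l).symm⟩
    · rintro ⟨c, rfl⟩ i
      exact ⟨c i, rfl⟩
  have hinj : Function.Injective (fun c : Fin 2 → F => (Matrix.of fun i => c i • v)) := by
    intro c d h
    funext i
    have := congrFun (congrFun (congrArg (fun M => (M : Matrix (Fin 2) (Fin 2) F)) h) i) j₀
    simp only [Matrix.of_apply, Pi.smul_apply, smul_eq_mul] at this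
    exact mul_right_cancel₀ hj₀ this
  rw [hrange, ← Set.image_univ, Set.ncard_image_of_injective _ hinj, Set.ncard_univ]
  simp [Nat.card_eq_fintype_card]

end OrbitAux

open OrbitAux in
/-- Over a finite field `F` with `q` elements, there are exactly
`q + 1` distinct sets of the form `{DM : D ∈ M₂(F)}` as `M` ranges over nonzero
matrices of determinant zero; any two distinct such sets intersect only in `0`,
and each has `q²` elements. -/
theorem orbit_partition
    (F : Type*) [Field F] [Fintype F] (q : ℕ) (hq : q = Fintype.card F) :
    Set.ncard {S : Set (Matrix (Fin 2) (Fin 2) F) |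
        ∃ M : Matrix (Fin 2) (Fin 2) F, M ≠ 0 ∧ M.det = 0 ∧
          S = {N | ∃ D : Matrix (Fin 2) (Fin 2) F, N = D * M}} = q + 1 ∧
    (∀ M M' : Matrix (Fin 2) (Fin 2) F,
        M ≠ 0 → M.det = 0 → M' ≠ 0 → M'.det = 0 →
        {N | ∃ D : Matrix (Fin 2) (Fin 2) F, N = D * M} =
          {N | ∃ D : Matrix (Fin 2) (Fin 2) F, N = D * M'} ∨
        {N | ∃ D : Matrix (Fin 2) (Fin 2) F, N = D * M} ∩
          {N | ∃ D : Matrix (Fin 2) (Fin 2) F, N = D * M'} = {0}) ∧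
    (∀ M : Matrix (Fin 2) (Fin 2) F, M ≠ 0 → M.det = 0 →
        Set.ncard {N | ∃ D : Matrix (Fin 2) (Fin 2) F, N = D * M} = q ^ 2) := by
  refine ⟨?_, ?_, ?_⟩
  · -- count: q + 1 classes
    have hset : {S : Set (Matrix (Fin 2) (Fin 2) F) |
        ∃ M : Matrix (Fin 2) (Fin 2) F, M ≠ 0 ∧ M.det = 0 ∧
          S = {N | ∃ D : Matrix (Fin 2) (Fin 2) F, N = D * M}} =
        insert (Sv (![0, 1] : Fin 2 → F)) (Set.range fun t : F => Sv ![1, t]) := by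
      ext S
      constructor
      · rintro ⟨M, hM, hdet, rfl⟩
        obtain ⟨v, hv, hov⟩ := orbit_exists M hM hdet
        rw [hov]
        by_cases h0 : v 0 = 0
        · left
          have h1 : v 1 ≠ 0 := by
            intro h1
            apply hv
            funext l
            fin_cases l <;> assumption
          have hvv : v = v 1 • ![0, 1] := by
            funext l
            fin_cases l <;> simp [h0]
          rw [hvv, Sv_smul _ _ h1]
        · right
          refine ⟨v 1 / v 0, ?_⟩
          have hvv : v = v 0 • ![1, v 1 / v 0] := by
            funext l
            fin_cases l <;> simp <;> field_simp
          conv_rhs => rw [hvv]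
          rw [Sv_smul _ _ h0]
      · intro hS
        have key : ∀ v : Fin 2 → F, v ≠ 0 → Sv v ∈ {S : Set (Matrix (Fin 2) (Fin 2) F) |
            ∃ M : Matrix (Fin 2) (Fin 2) F, M ≠ 0 ∧ M.det = 0 ∧
              S = {N | ∃ D : Matrix (Fin 2) (Fin 2) F, N = D * M}} := by
          intro v hv
          exact ⟨cm v, cm_ne_zero hv, cm_det v, (cm_orbit v).symm⟩
        rcases hS with h | ⟨t, ht⟩
        · rw [h]
          exact key _ (by intro h; simpa using congrFun h 1)
        · rw [← ht]
          exact key _ (by intro h; simpa using congrFun h 0)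
    rw [hset]
    have hinj : Function.Injective fun t : F => Sv (![1, t] : Fin 2 → F) := by
      intro s t h
      obtain ⟨c, hc⟩ := Sv_sub _ _ h
      have h0 := congrFun hc 0
      have h1 := congrFun hc 1
      simp at h0 h1
      rw [← h0] at h1
      simpa using h1
    have hnm : Sv (![0, 1] : Fin 2 → F) ∉ Set.range fun t : F => Sv ![1, t] := by
      rintro ⟨t, ht⟩
      obtain ⟨c, hc⟩ := Sv_sub _ _ ht.symm
      have h0 := congrFun hc 0
      have h1 := congrFun hc 1
      simp at h0 h1
      rw [← h0] at h1
      simpa using h1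
    rw [Set.ncard_insert_of_notMem hnm (Set.finite_range _),
      ← Set.image_univ, Set.ncard_image_of_injective _ hinj, Set.ncard_univ]
    simp [hq, Nat.card_eq_fintype_card]
  · -- intersection
    intro M M' hM hdM hM' hdM'
    obtain ⟨v, hv, hov⟩ := orbit_exists M hM hdM
    obtain ⟨w, hw, how⟩ := orbit_exists M' hM' hdM'
    rw [hov, how]
    by_cases hcase : ∃ c : F, v = c • w
    · left
      obtain ⟨c, rfl⟩ := hcase
      have hc : c ≠ 0 := by
        rintro rfl
        exact hv (zero_smul _ _)
      exact Sv_smul w c hc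
    · right
      ext N
      simp only [Set.mem_inter_iff, Set.mem_singleton_iff]
      constructor
      · rintro ⟨h1, h2⟩
        funext i l
        obtain ⟨c, hc⟩ := h1 i
        obtain ⟨d, hd⟩ := h2 i
        have hce : c • v = d • w := by rw [← hc, ← hd]
        have hc0 : c = 0 := by
          by_contra hc0
          exact hcase ⟨c⁻¹ * d, by rw [mul_smul, ← hce, smul_smul, inv_mul_cancel₀ hc0, one_smul]⟩
        rw [hc, hc0, zero_smul]
        rfl
      · rintro rfl
        exact ⟨fun i => ⟨0, by simp; rfl⟩, fun i => ⟨0, by simp; rfl⟩⟩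
  · -- each class has q² elements
    intro M hM hdM
    obtain ⟨v, hv, hov⟩ := orbit_exists M hM hdM
    rw [hov, Sv_card v hv, hq]
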